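/- Let m ≥ 1, ε > 0, let η ∈ ℝ^m be nonzero, and let σ, Ψ, r ∈ ℝ satisfy σ² = Ψ² ‖η‖². Define linear maps on ℝ^m × ℝ × ℝ: s(u, a, b) = (Ψ r² a η, -Ψ ⟨η, u⟩ + r σ b, r σ a); q(u, a, b) = (u, ε^{-1} Ψ r² a, -ε^{-2} ‖η‖^{-1} Ψ² r² ⟨η, u⟩ + ε^{-2} ‖η‖^{-1} Ψ r³ σ b); and s'(u, a, b) = (ε a η, ε ‖η‖ b, 0). Then q ∘ s = s' ∘ q; that is, conjugating s by q (which is invertible when Ψ, r, σ ≠ 0) turns s into the strictly upper triangular map s' whose nonzero blocks have size ε‖η‖. -/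

import Mathlib

theorem stmt17 (m : ℕ) (hm : 1 ≤ m) (ε : ℝ) (hε : 0 < ε)
    (η : Fin m → ℝ) (hη : η ≠ 0) (σ Ψ r : ℝ)
    (htrap : σ ^ 2 = Ψ ^ 2 * ∑ i, η i ^ 2)
    -- the zeroth order part `s` of the subprincipal operator at the trapped set
    (s : (Fin m → ℝ) × ℝ × ℝ → (Fin m → ℝ) × ℝ × ℝ)
    (hs : s = fun v =>
      (fun i => Ψ * r ^ 2 * v.2.1 * η i,
        -Ψ * (∑ i, η i * v.1 i) + r * σ * v.2.2,
        r * σ * v.2.1))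
    -- the change of basis `q`
    (q : (Fin m → ℝ) × ℝ × ℝ → (Fin m → ℝ) × ℝ × ℝ)
    (hq : q = fun v =>
      (v.1,
        ε⁻¹ * Ψ * r ^ 2 * v.2.1,
        -(ε ^ 2)⁻¹ * (Real.sqrt (∑ i, η i ^ 2))⁻¹ * Ψ ^ 2 * r ^ 2
            * (∑ i, η i * v.1 i)
          + (ε ^ 2)⁻¹ * (Real.sqrt (∑ i, η i ^ 2))⁻¹ * Ψ * r ^ 3 * σ * v.2.2))
    -- the strictly upper triangular map `s'`
    (s' : (Fin m → ℝ) × ℝ × ℝ → (Fin m → ℝ) × ℝ × ℝ)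
    (hs' : s' = fun v =>
      (fun i => ε * v.2.1 * η i,
        ε * Real.sqrt (∑ i, η i ^ 2) * v.2.2,
        0)) :
    ∀ v, q (s v) = s' (q v) := by
  subst hs hq hs'
  have hsum : 0 < ∑ i, η i ^ 2 := by
    obtain ⟨i, hi⟩ := Function.ne_iff.mp hη
    exact Finset.sum_pos' (fun j _ => sq_nonneg _) ⟨i, Finset.mem_univ i, lt_of_le_of_ne (sq_nonneg _) (Ne.symm (pow_ne_zero 2 (by simpa using hi)))⟩
  set N := Real.sqrt (∑ i, η i ^ 2) with hN
  have hN2 : N ^ 2 = ∑ i, η i ^ 2 := Real.sq_sqrt hsum.le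
  have hNne : N ≠ 0 := (Real.sqrt_pos.mpr hsum).ne'
  have hεne : ε ≠ 0 := ne_of_gt hε
  rintro ⟨u, a, b⟩
  refine Prod.ext ?_ (Prod.ext ?_ ?_)
  · funext i
    simp only
    field_simp
  · simp only
    field_simp
  · simp only
    have h1 : (∑ i, η i * (Ψ * r ^ 2 * a * η i)) = Ψ * r ^ 2 * a * ∑ i, η i ^ 2 := by
      rw [Finset.mul_sum]; congr 1; funext i; ring
    have hσ : σ ^ 2 = Ψ ^ 2 * N ^ 2 := by rw [hN2]; exact htrap
    rw [h1, ← hN2]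
    linear_combination ((ε ^ 2)⁻¹ * N⁻¹ * Ψ * r ^ 4 * a) * hσ
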